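/- Let γ > 0, λ₁ ≥ 0, λ₂ > 0, let p be a probability density with ⟨p^{1+γ}⟩ < ∞, let s : X → ℝ be measurable with ⟨p^{1+γ} s⟩ ∈ ℝ, and let x₁, …, x_n ∈ X with n ≥ 1. Set S_n = (1/n)·Σ_{i=1}^n p(x_i)^γ and assume λ₁ + λ₂·S_n > 0 and λ₁ + λ₂·⟨p^{1+γ}⟩ > 0. Then the functional density power divergence estimating equation for v(z) = (1/λ₂)·log(λ₁ + λ₂ z), namely −(1/(λ₁ + λ₂·S_n))·(1/n)·Σ_{i=1}^n p(x_i)^γ·s(x_i) + ⟨p^{1+γ} s⟩/(λ₁ + λ₂·⟨p^{1+γ}⟩) = 0, holds if and only if (1/n)·Σ_{i=1}^n ψ(x_i) = 0, where ψ(x) = −p(x)^γ·s(x)·(λ₁ + λ₂·⟨p^{1+γ}⟩) + ⟨p^{1+γ} s⟩·(λ₁ + λ₂·p(x)^γ). Hence the bridge density power divergence estimation problem reduces to M-estimation. -/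

import Mathlib

open MeasureTheory Filter Real Topology Set

/-- A probability density w.r.t. a measure `ν`: measurable, nonnegative, integrating to 1. -/
def IsProbDensity {X : Type*} [MeasurableSpace X] (ν : Measure X) (p : X → ℝ) : Prop :=
  Measurable p ∧ (∀ x, 0 ≤ p x) ∧ ∫ x, p x ∂ν = 1

/-- Algebraic core: the estimating-equation equivalence for the log-type `v`. -/
theorem bdpd_algebra (l1 l2 B C a b : ℝ) (n : ℕ) (hn : 1 ≤ n)
    (hS : 0 < l1 + l2 * ((1/(n:ℝ)) * a)) (hB : 0 < l1 + l2 * B) :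
    (-(1 / (l1 + l2 * ((1/(n:ℝ)) * a))) * ((1/(n:ℝ)) * b) + C / (l1 + l2 * B) = 0) ↔
      ((1/(n:ℝ)) * (-(l1 + l2*B)*b + C*((n:ℝ)*l1 + l2*a)) = 0) := by
  have hn' : (n:ℝ) ≠ 0 := Nat.cast_ne_zero.2 (by omega)
  have h1 : l1 + l2 * ((1/(n:ℝ)) * a) ≠ 0 := ne_of_gt hS
  have h2 : l1 + l2 * B ≠ 0 := ne_of_gt hB
  have ha : (n:ℝ)*l1 + l2*a = (n:ℝ) * (l1 + l2 * ((1/(n:ℝ)) * a)) := by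
    field_simp
  rw [ha]
  set d1 := l1 + l2 * ((1/(n:ℝ)) * a) with hd1
  set d2 := l1 + l2 * B with hd2
  rw [show (-(1/d1)) * ((1/(n:ℝ))*b) + C/d2
      = (-(d2*b) + C*((n:ℝ)*d1)) / ((n:ℝ)*(d1*d2)) by field_simp,
    div_eq_zero_iff]
  constructor
  · rintro (h | h)
    · rw [show -d2*b + C*((n:ℝ)*d1) = -(d2*b) + C*((n:ℝ)*d1) by ring, h, mul_zero]
    · exact absurd h (mul_ne_zero hn' (mul_ne_zero h1 h2))
  · intro h
    have := (mul_eq_zero.1 h).resolve_left (one_div_ne_zero hn')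
    exact Or.inl (by linarith [this])

/-- the FDPD estimating equation for `v(z) = (1/λ₂) log(λ₁ + λ₂ z)` holds iff
the M-estimation equation `(1/n)∑ᵢ ψ(xᵢ) = 0` holds, with
`ψ(x) = −p(x)^γ s(x)(λ₁ + λ₂⟨p^{1+γ}⟩) + ⟨p^{1+γ}s⟩(λ₁ + λ₂ p(x)^γ)`; hence the bridge
density power divergence estimation problem reduces to M-estimation. -/
theorem bdpd_reduces_to_m_estimation {X : Type*} [MeasurableSpace X] (ν : Measure X)
    [SigmaFinite ν] (γ l1 l2 : ℝ) (hγ : 0 < γ) (hl1 : 0 ≤ l1) (hl2 : 0 < l2)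
    (p : X → ℝ) (hp : IsProbDensity ν p)
    (hpI : Integrable (fun y => p y ^ (1 + γ)) ν)
    (s : X → ℝ) (hsm : Measurable s)
    (hAI : Integrable (fun y => p y ^ (1 + γ) * s y) ν)
    (n : ℕ) (hn : 1 ≤ n) (x : Fin n → X)
    (hS : 0 < l1 + l2 * ((1 / (n : ℝ)) * ∑ i, p (x i) ^ γ))
    (hB : 0 < l1 + l2 * ∫ y, p y ^ (1 + γ) ∂ν) :
    (-(1 / (l1 + l2 * ((1 / (n : ℝ)) * ∑ i, p (x i) ^ γ))) *
          ((1 / (n : ℝ)) * ∑ i, p (x i) ^ γ * s (x i)) +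
        (∫ y, p y ^ (1 + γ) * s y ∂ν) / (l1 + l2 * ∫ y, p y ^ (1 + γ) ∂ν) = 0) ↔
      ((1 / (n : ℝ)) * ∑ i,
          (-(p (x i) ^ γ) * s (x i) * (l1 + l2 * ∫ y, p y ^ (1 + γ) ∂ν) +
            (∫ y, p y ^ (1 + γ) * s y ∂ν) * (l1 + l2 * p (x i) ^ γ)) = 0) := by
  set B := ∫ y, p y ^ (1 + γ) ∂ν with hBdef
  set C := ∫ y, p y ^ (1 + γ) * s y ∂ν with hCdef
  have hsum : ∑ i, (-(p (x i) ^ γ) * s (x i) * (l1 + l2 * B) + C * (l1 + l2 * p (x i) ^ γ))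
      = -(l1 + l2*B) * (∑ i, p (x i) ^ γ * s (x i))
        + C * ((n:ℝ)*l1 + l2 * ∑ i, p (x i) ^ γ) := by
    have h : ∀ i : Fin n, -(p (x i) ^ γ) * s (x i) * (l1 + l2 * B) + C * (l1 + l2 * p (x i) ^ γ)
        = -(l1 + l2*B) * (p (x i) ^ γ * s (x i)) + (C * l1 + C * l2 * p (x i) ^ γ) := by
      intro i; ring
    simp_rw [h, Finset.sum_add_distrib, ← Finset.mul_sum, Finset.sum_const,
      Finset.card_univ, Fintype.card_fin, nsmul_eq_mul]
    ring
  rw [hsum]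
  exact bdpd_algebra l1 l2 B C (∑ i, p (x i) ^ γ) (∑ i, p (x i) ^ γ * s (x i)) n hn hS hB
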